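/- In the Dirac case, the kernel of the deformed map Π_D : V* → V is exactly ker Π_D = ker Π + span{φ_1, …, φ_k}, and this sum of subspaces of V* is direct. -/
import Mathlib


/-- In the Dirac case, ker Π_D = ker Π + span{φ_1,…,φ_k},
and this sum of subspaces of V* is direct. -/
theorem stmt_7
    (V : Type*) [AddCommGroup V] [Module ℝ V] [FiniteDimensional ℝ V]
    (k : ℕ)
    (Pi : Module.Dual ℝ V →ₗ[ℝ] V)
    (hskew : ∀ α β : Module.Dual ℝ V, α (Pi β) = - β (Pi α))
    (φ : Fin k → Module.Dual ℝ V)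
    (M : Matrix (Fin k) (Fin k) ℝ)
    (hM : ∀ i j, M i j = φ i (Pi (φ j)))
    (hMinv : IsUnit M.det)
    (X : Fin k → V) (hX : ∀ i, X i = Pi (φ i))
    (Zv : Fin k → V) (hZ : ∀ i, Zv i = ∑ j, (M⁻¹ j i) • X j)
    (S Z : Submodule ℝ V)
    (hS : S = ⨅ i, LinearMap.ker (φ i))
    (hZsub : Z = Submodule.span ℝ (Set.range X))
    (P : V →ₗ[ℝ] V)
    (hPmem : ∀ v : V, P v ∈ S)
    (hPid : ∀ v ∈ S, P v = v)
    (hPZ : ∀ v ∈ Z, P v = 0)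
    (PiD : Module.Dual ℝ V →ₗ[ℝ] V)
    (hPiD : ∀ α : Module.Dual ℝ V, PiD α = P (Pi (α.comp P))) :
    LinearMap.ker PiD = LinearMap.ker Pi ⊔ Submodule.span ℝ (Set.range φ) ∧
    LinearMap.ker Pi ⊓ Submodule.span ℝ (Set.range φ) = ⊥ := by
  have hMM : M * M⁻¹ = 1 := Matrix.mul_nonsing_inv M hMinv
  have hMM' : M⁻¹ * M = 1 := Matrix.nonsing_inv_mul M hMinv
  have hφX : ∀ l j, φ l (X j) = M l j := by
    intro l j; rw [hX, hM]
  -- the complementary projection onto Z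
  set Q : V → V := fun v => ∑ j, (∑ i, M⁻¹ j i * φ i v) • X j with hQdef
  have hQZ : ∀ v, Q v ∈ Z := by
    intro v
    rw [hZsub]
    exact Submodule.sum_mem _ fun j _ =>
      Submodule.smul_mem _ _ (Submodule.subset_span ⟨j, rfl⟩)
  have hφQ : ∀ l v, φ l (Q v) = φ l v := by
    intro l v
    simp only [hQdef, map_sum, map_smul, smul_eq_mul, hφX]
    have h1 : ∑ j, (∑ i, M⁻¹ j i * φ i v) * M l j
        = ∑ i, ((M * M⁻¹) l i) * φ i v := by
      simp only [Finset.sum_mul, Matrix.mul_apply, Finset.sum_mul]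
      rw [Finset.sum_comm]
      exact Finset.sum_congr rfl fun i _ => Finset.sum_congr rfl fun j _ => by ring
    rw [h1, hMM]
    simp [Matrix.one_apply]
  have hSQ : ∀ v, v - Q v ∈ S := by
    intro v
    rw [hS, Submodule.mem_iInf]
    intro l
    rw [LinearMap.mem_ker, map_sub, hφQ, sub_self]
  have hPv : ∀ v, P v = v - Q v := by
    intro v
    have h1 : P (v - Q v) = v - Q v := hPid _ (hSQ v)
    have h2 : P (Q v) = 0 := hPZ _ (hQZ v)
    have h3 : P v = P (v - Q v) + P (Q v) := by
      rw [← map_add, sub_add_cancel]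
    rw [h3, h1, h2, add_zero]
  -- the "gamma" covector: α ∘ P = α - γ α, with γ α ∈ span φ
  set γ : Module.Dual ℝ V → Module.Dual ℝ V :=
    fun α => ∑ i, (∑ j, M⁻¹ j i * α (X j)) • φ i with hγdef
  have hγspan : ∀ α, γ α ∈ Submodule.span ℝ (Set.range φ) := by
    intro α
    exact Submodule.sum_mem _ fun i _ =>
      Submodule.smul_mem _ _ (Submodule.subset_span ⟨i, rfl⟩)
  have hcompP : ∀ α : Module.Dual ℝ V, α.comp P = α - γ α := by
    intro α
    ext v
    simp only [LinearMap.comp_apply, LinearMap.sub_apply, hγdef, LinearMap.sum_apply,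
      LinearMap.smul_apply, smul_eq_mul]
    rw [hPv, map_sub]
    congr 1
    simp only [hQdef, map_sum, map_smul, smul_eq_mul]
    simp only [Finset.sum_mul]
    rw [Finset.sum_comm]
    exact Finset.sum_congr rfl fun i _ => Finset.sum_congr rfl fun j _ => by ring
  -- Pi maps span φ into Z
  have hPiSpan : ∀ δ, δ ∈ Submodule.span ℝ (Set.range φ) → Pi δ ∈ Z := by
    intro δ hδ
    rw [hZsub]
    have h := Submodule.mem_map_of_mem (f := Pi) hδ
    rw [Submodule.map_span] at h
    refine Submodule.span_mono ?_ h
    rintro _ ⟨_, ⟨i, rfl⟩, rfl⟩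
    exact ⟨i, hX i⟩
  constructor
  · apply le_antisymm
    · -- ker PiD ≤ ker Pi ⊔ span φ
      intro α hα
      rw [LinearMap.mem_ker, hPiD] at hα
      set w := Pi (α.comp P) with hw
      have hwZ : w ∈ Z := by
        have h0 : w - Q w = 0 := by rw [← hPv]; exact hα
        have h1 : w = Q w := sub_eq_zero.mp h0
        rw [h1]; exact hQZ w
      rw [hZsub, Submodule.mem_span_range_iff_exists_fun] at hwZ
      obtain ⟨d, hd⟩ := hwZ
      set δ : Module.Dual ℝ V := ∑ j, d j • φ j with hδdef
      have hδspan : δ ∈ Submodule.span ℝ (Set.range φ) :=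
        Submodule.sum_mem _ fun j _ =>
          Submodule.smul_mem _ _ (Submodule.subset_span ⟨j, rfl⟩)
      have hPiδ : Pi δ = w := by
        rw [hδdef, map_sum]
        simp only [map_smul]
        rw [← hd]
        exact Finset.sum_congr rfl fun j _ => by rw [hX]
      have hy : α.comp P - δ ∈ LinearMap.ker Pi := by
        rw [LinearMap.mem_ker, map_sub, hPiδ, ← hw, sub_self]
      have hz : δ + γ α ∈ Submodule.span ℝ (Set.range φ) :=
        Submodule.add_mem _ hδspan (hγspan α)
      refine Submodule.mem_sup.mpr ⟨_, hy, _, hz, ?_⟩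
      rw [hcompP α]
      abel
    · -- ker Pi ⊔ span φ ≤ ker PiD
      apply sup_le
      · intro α hα
        rw [LinearMap.mem_ker] at hα ⊢
        rw [hPiD, hcompP, map_sub, hα, zero_sub, map_neg, neg_eq_zero]
        exact hPZ _ (hPiSpan _ (hγspan α))
      · rw [Submodule.span_le]
        rintro _ ⟨i, rfl⟩
        rw [SetLike.mem_coe, LinearMap.mem_ker, hPiD]
        have : (φ i).comp P = 0 := by
          ext v
          have := hPmem v
          rw [hS, Submodule.mem_iInf] at this
          exact this i
        rw [this, map_zero, map_zero]
  · rw [eq_bot_iff]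
    intro α hα
    obtain ⟨hα1, hα2⟩ := hα
    rw [SetLike.mem_coe, LinearMap.mem_ker] at hα1
    rw [SetLike.mem_coe, Submodule.mem_span_range_iff_exists_fun] at hα2
    obtain ⟨c, hc⟩ := hα2
    have hMc : M.mulVec c = 0 := by
      funext l
      have : φ l (Pi α) = 0 := by rw [hα1, map_zero]
      rw [← hc] at this
      simp only [map_sum, map_smul, smul_eq_mul] at this
      rw [Matrix.mulVec, _root_.Pi.zero_apply]
      simp only [dotProduct]
      rw [← this]
      exact Finset.sum_congr rfl fun i _ => by rw [← hM]; ring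
    have hc0 : c = 0 := by
      have := congrArg (M⁻¹.mulVec) hMc
      rwa [Matrix.mulVec_mulVec, hMM', Matrix.one_mulVec, Matrix.mulVec_zero] at this
    rw [hc0] at hc
    simp only [_root_.Pi.zero_apply, zero_smul, Finset.sum_const_zero] at hc
    rw [Submodule.mem_bot, ← hc]
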